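/- If n ≥ 3 is even and k ≥ 1 is odd, then there is no combinatorial degenerated magic polygon D(n,k); that is, no labels x, root label c, and magic sum u satisfy the defining conditions. -/

import Mathlib

/-- The labeling function of a combinatorial degenerated magic polygon `D(n,k)`:
the labels `x t p` of the points on the `k` polygons (root vertex excluded)
together with the root label `c`. -/
def degMagicLabels (n k : ℕ) (x : Fin k → Fin (k * (n - 2) + 1) → ℕ) (c : ℕ) :
    (Fin k × Fin (k * (n - 2) + 1)) ⊕ Unit → ℕ :=
  Sum.elim (fun q => x q.1 q.2) (fun _ => c)

/-- `(x, c, u)` is a combinatorial degenerated magic polygon `D(n,k)`: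
(1) the `k²(n−2)+k+1` labels are exactly `1, …, k²(n−2)+k+1`, each occurring once;
(2) every edge sum `∑_{j=0}^{k} x t (i·k + j)`, for an edge not adjacent to the
root (`0 ≤ i ≤ n−3`), equals `u`;
(3) for every position `p`, the sum `(∑ t, x t p) + c` along the segment joining
the root vertex to the boundary of the largest polygon equals `u`. -/
def IsDegMagicPolygon (n k : ℕ) (x : Fin k → Fin (k * (n - 2) + 1) → ℕ) (c u : ℕ) : Prop :=
  Function.Injective (degMagicLabels n k x c) ∧
  Set.range (degMagicLabels n k x c) = Set.Icc 1 (k ^ 2 * (n - 2) + k + 1) ∧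
  (∀ t : Fin k, ∀ i ∈ Finset.range (n - 2),
    ∑ j ∈ Finset.range (k + 1), x t (Fin.ofNat _ (i * k + j)) = u) ∧
  (∀ p : Fin (k * (n - 2) + 1), (∑ t : Fin k, x t p) + c = u)

theorem degMagicPolygon_nonexistence (n k : ℕ) (hn : 3 ≤ n) (hk : 1 ≤ k)
    (hne : Even n) (hko : Odd k) :
    ¬ ∃ (x : Fin k → Fin (k * (n - 2) + 1) → ℕ) (c u : ℕ),
      IsDegMagicPolygon n k x c u := by
  rintro ⟨x, c, u, hinj, hrange, h2, h3⟩
  have hm1 : 1 ≤ n - 2 := by omega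
  have hmeven : Even (n - 2) := by
    obtain ⟨r, hr⟩ := hne
    exact ⟨r - 1, by omega⟩
  set N := k ^ 2 * (n - 2) + k + 1 with hN
  -- N is even
  have hNeven : Even N := by
    have h1 : Even (k ^ 2 * (n - 2)) := hmeven.mul_left _
    have h2' : Odd (k ^ 2 * (n - 2) + k) := h1.add_odd hko
    exact h2'.add_one
  have hNM : N = (k * (n - 2) + 1) * k + 1 := by rw [hN]; ring
  -- total sum of labels
  have himg : (Finset.univ : Finset ((Fin k × Fin (k * (n - 2) + 1)) ⊕ Unit)).image
      (degMagicLabels n k x c) = Finset.Icc 1 N := by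
    apply Finset.coe_injective
    rw [Finset.coe_image, Finset.coe_univ, Set.image_univ, Finset.coe_Icc]
    exact hrange
  have hsum1 : ∑ b ∈ Finset.Icc 1 N, b
      = ∑ a : (Fin k × Fin (k * (n - 2) + 1)) ⊕ Unit, degMagicLabels n k x c a := by
    rw [← himg, Finset.sum_image (fun a _ b _ h => hinj h)]
  have hsum2 : ∑ a : (Fin k × Fin (k * (n - 2) + 1)) ⊕ Unit, degMagicLabels n k x c a
      = (∑ p : Fin (k * (n - 2) + 1), ∑ t : Fin k, x t p) + c := by
    simp only [degMagicLabels, Fintype.sum_sum_type, Fintype.sum_prod_type]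
    rw [Finset.sum_comm]
    simp
  -- Gauss
  have hgauss : (∑ b ∈ Finset.Icc 1 N, b) * 2 = (N + 1) * N := by
    have he : Finset.Icc 1 N = (Finset.range (N + 1)).erase 0 := by
      ext a; simp [Nat.lt_succ_iff]; omega
    rw [he, Finset.sum_erase (f := fun b => b) _ rfl, Finset.sum_range_id_mul_two]
    simp
  -- segments at positions 0..k and the first edge give u = (k+1)*c
  have e1 : ∑ j ∈ Finset.range (k + 1), ∑ t : Fin k, x t (Fin.ofNat _ j)
      = k * u := by
    rw [Finset.sum_comm]
    have ht : ∀ t : Fin k,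
        ∑ j ∈ Finset.range (k + 1), x t (Fin.ofNat _ j) = u := by
      intro t
      have := h2 t 0 (by simp only [Finset.mem_range]; omega)
      simpa using this
    rw [Finset.sum_congr rfl (fun t _ => ht t)]
    simp [mul_comm]
  have e2 : ∑ j ∈ Finset.range (k + 1),
      ((∑ t : Fin k, x t (Fin.ofNat _ j)) + c) = (k + 1) * u := by
    rw [Finset.sum_congr rfl (fun j _ => h3 _)]
    simp [mul_comm]
  rw [Finset.sum_add_distrib, e1, Finset.sum_const, Finset.card_range, smul_eq_mul] at e2
  have hu : u = (k + 1) * c := by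
    have h' : k * u + u = k * u + (k + 1) * c := by
      rw [e2]; ring
    omega
  -- sum over all segments
  have e3 : (∑ p : Fin (k * (n - 2) + 1), ∑ t : Fin k, x t p) + (k * (n - 2) + 1) * c
      = (k * (n - 2) + 1) * u := by
    have h' : ∑ p : Fin (k * (n - 2) + 1), ((∑ t : Fin k, x t p) + c)
        = ∑ p : Fin (k * (n - 2) + 1), u :=
      Finset.sum_congr rfl (fun p _ => h3 p)
    rw [Finset.sum_add_distrib, Finset.sum_const, Finset.sum_const] at h'
    simpa [mul_comm] using h'
  -- derive the value of the sum of all x's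
  have hXval : (∑ p : Fin (k * (n - 2) + 1), ∑ t : Fin k, x t p)
      = (k * (n - 2) + 1) * k * c := by
    have h' : (∑ p : Fin (k * (n - 2) + 1), ∑ t : Fin k, x t p) + (k * (n - 2) + 1) * c
        = (k * (n - 2) + 1) * k * c + (k * (n - 2) + 1) * c := by
      rw [e3, hu]; ring
    omega
  -- conclude (N+1) * N = 2 * c * N
  have hfinal : (N + 1) * N = 2 * c * N := by
    have h2S : ((∑ p : Fin (k * (n - 2) + 1), ∑ t : Fin k, x t p) + c) * 2 = (N + 1) * N := by
      rw [← hsum2, ← hsum1, hgauss]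
    rw [← h2S, hXval, hNM]; ring
  have hNpos : 0 < N := by rw [hN]; omega
  have hNc : N + 1 = 2 * c := Nat.eq_of_mul_eq_mul_right hNpos hfinal
  obtain ⟨r, hr⟩ := hNeven
  omega
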